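/- Non-attainment example: let y₀ = 0, y_n = Σ_{k=1}^n 1/k², x_n = (y_{n−1}+y_n)/2, y_∞ = Σ_{k=1}^∞ 1/k². Suppose g : ℝ → ℝ ∪ {−∞} is concave on [0, y_∞), affine on each interval [y_{n−1}, y_n] with slope h_n, and the slopes satisfy h_n ≥ h_{n+1} + 1 for all n ≥ 1. Then lim_{y → y_∞⁻} g(y) = −∞. -/

import Mathlib

open Set Filter Finset

/-- Let `y_n = Σ_{k=1}^n 1/k²`, `y_∞ = Σ_{k=1}^∞ 1/k²`. If `g` is concave on `[0, y_∞)`,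
affine with slope `h_{n+1}` on each interval `[y_n, y_{n+1}]`, and the slopes satisfy
`h_n ≥ h_{n+1} + 1`, then `g(y) → -∞` as `y → y_∞⁻`. -/
theorem piecewise_affine_concave_tendsto_atBot
    (g : ℝ → ℝ) (h c : ℕ → ℝ)
    (y : ℕ → ℝ) (hy : y = fun n => ∑ k ∈ range n, (1 : ℝ) / ((k : ℝ) + 1) ^ 2)
    (yinf : ℝ) (hyinf : yinf = ∑' k : ℕ, (1 : ℝ) / ((k : ℝ) + 1) ^ 2)
    (hconc : ConcaveOn ℝ (Ico 0 yinf) g)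
    (haff : ∀ n : ℕ, ∀ t ∈ Icc (y n) (y (n + 1)), g t = h (n + 1) * t + c (n + 1))
    (hslope : ∀ n : ℕ, 1 ≤ n → h (n + 1) + 1 ≤ h n) :
    Tendsto g (nhdsWithin yinf (Iio yinf)) atBot := by
  have hypos : ∀ n : ℕ, (0:ℝ) < 1 / ((n : ℝ) + 1) ^ 2 := by
    intro n; positivity
  have hy1 : ∀ n : ℕ, y (n + 1) = y n + 1 / ((n : ℝ) + 1) ^ 2 := by
    subst hy; intro n; simp [Finset.sum_range_succ]
  have hmono : StrictMono y := by
    apply strictMono_nat_of_lt_succ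
    intro n; rw [hy1 n]; linarith [hypos n]
  have hsum : Summable (fun k : ℕ => (1:ℝ) / ((k : ℝ) + 1) ^ 2) := by
    have h2 : Summable (fun n : ℕ => (1:ℝ) / (n : ℝ) ^ 2) := by
      simpa using Real.summable_one_div_nat_pow.mpr (by norm_num : 1 < 2)
    have := (summable_nat_add_iff 1).mpr h2
    simpa [Nat.cast_add] using this
  -- y n < yinf
  have hlt : ∀ n, y n < yinf := by
    intro n
    have h1 : y (n + 1) ≤ yinf := by
      rw [hy, hyinf]
      exact Summable.sum_le_tsum (range (n+1)) (fun i _ => (hypos i).le) hsum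
    have := hy1 n
    nlinarith [hypos n]
  -- step relation for g (y n)
  have hstep : ∀ n : ℕ, g (y (n + 1)) = g (y n) + h (n + 1) * (1 / ((n : ℝ) + 1) ^ 2) := by
    intro n
    have h1 := haff n (y n) ⟨le_refl _, (hmono (Nat.lt_succ_self n)).le⟩
    have h2 := haff n (y (n + 1)) ⟨(hmono (Nat.lt_succ_self n)).le, le_refl _⟩
    rw [h1, h2, hy1 n]; ring
  -- slope bound
  have hA : ∀ k : ℕ, h (k + 2) ≤ h 2 - k := by
    intro k
    induction k with
    | zero => simp
    | succ k ih =>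
      have := hslope (k + 2) (by omega)
      push_cast
      push_cast at ih
      linarith
  -- termwise bound
  set C : ℝ := max (h 1 + 1) (h 2 + 2) with hC
  have htb : ∀ k : ℕ, h (k + 1) * (1 / ((k : ℝ) + 1) ^ 2) ≤
      C * (1 / ((k : ℝ) + 1) ^ 2) - 1 / ((k : ℝ) + 1) := by
    intro k
    match k with
    | 0 =>
      have : h 1 + 1 ≤ C := le_max_left _ _
      norm_num; linarith
    | (k + 1) =>
      have h1 : h (k + 2) ≤ h 2 - k := hA k
      have h2 : h 2 + 2 ≤ C := le_max_right _ _
      have hu : (0:ℝ) < 1 / ((k : ℝ) + 2) ^ 2 := by positivity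
      have hkey : ((k:ℝ) + 2) * (1 / ((k : ℝ) + 2) ^ 2) = 1 / ((k : ℝ) + 2) := by
        field_simp
      push_cast
      have hcast : ((k:ℝ) + 1 + 1) = (k:ℝ) + 2 := by ring
      rw [hcast]
      nlinarith [mul_le_mul_of_nonneg_right h1 hu.le, mul_le_mul_of_nonneg_right h2 hu.le, hkey]
  -- telescoping
  have htel : ∀ n : ℕ, g (y n) = g (y 0) + ∑ k ∈ range n, h (k + 1) * (1 / ((k : ℝ) + 1) ^ 2) := by
    intro n
    induction n with
    | zero => simp
    | succ n ih => rw [Finset.sum_range_succ, hstep n, ih]; ring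
  -- bound on partial sums of 1/(k+1)^2
  set T : ℝ := ∑' k : ℕ, (1:ℝ) / ((k : ℝ) + 1) ^ 2 with hT
  have hSb : ∀ n : ℕ, ∑ k ∈ range n, (1:ℝ) / ((k : ℝ) + 1) ^ 2 ≤ T :=
    fun n => Summable.sum_le_tsum (range n) (fun i _ => (hypos i).le) hsum
  have hSnn : ∀ n : ℕ, (0:ℝ) ≤ ∑ k ∈ range n, (1:ℝ) / ((k : ℝ) + 1) ^ 2 :=
    fun n => Finset.sum_nonneg fun i _ => (hypos i).le
  -- g (y n) → -∞
  have hbound : ∀ n : ℕ, g (y n) ≤ g (y 0) + |C| * T -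
      ∑ k ∈ range n, (1:ℝ) / ((k : ℝ) + 1) := by
    intro n
    rw [htel n]
    have h1 : ∑ k ∈ range n, h (k + 1) * (1 / ((k : ℝ) + 1) ^ 2) ≤
        ∑ k ∈ range n, (C * (1 / ((k : ℝ) + 1) ^ 2) - 1 / ((k : ℝ) + 1)) :=
      Finset.sum_le_sum fun k _ => htb k
    rw [Finset.sum_sub_distrib, ← Finset.mul_sum] at h1
    have h2 : C * (∑ k ∈ range n, (1:ℝ) / ((k : ℝ) + 1) ^ 2) ≤ |C| * T := by
      calc C * (∑ k ∈ range n, (1:ℝ) / ((k : ℝ) + 1) ^ 2)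
          ≤ |C| * (∑ k ∈ range n, (1:ℝ) / ((k : ℝ) + 1) ^ 2) :=
            mul_le_mul_of_nonneg_right (le_abs_self C) (hSnn n)
        _ ≤ |C| * T := mul_le_mul_of_nonneg_left (hSb n) (abs_nonneg C)
    linarith
  have hHtop : Tendsto (fun n : ℕ => ∑ k ∈ range n, (1:ℝ) / ((k : ℝ) + 1)) atTop atTop := by
    simpa using Real.tendsto_sum_range_one_div_nat_succ_atTop
  have hgbot : Tendsto (fun n : ℕ => g (y n)) atTop atBot := by
    apply tendsto_atBot_mono hbound
    have := tendsto_neg_atTop_atBot.comp hHtop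
    have h3 : Tendsto (fun n : ℕ => g (y 0) + |C| * T +
        -∑ k ∈ range n, (1:ℝ) / ((k : ℝ) + 1)) atTop atBot :=
      tendsto_atBot_add_const_left _ _ this
    simpa [sub_eq_add_neg] using h3
  -- y n → yinf
  have hty : Tendsto y atTop (nhds yinf) := by
    rw [hy, hyinf]
    exact hsum.hasSum.tendsto_sum_nat
  -- eventually slopes ≤ 0
  obtain ⟨N₁, hN₁⟩ := exists_nat_ge (h 2 + 1)
  have hneg : ∀ n : ℕ, N₁ + 1 ≤ n → h (n + 1) ≤ 0 := by
    intro n hn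
    obtain ⟨m, rfl⟩ : ∃ m, n = m + 1 := ⟨n - 1, by omega⟩
    have := hA m
    have : (N₁ : ℝ) ≤ m := by exact_mod_cast Nat.cast_le.mpr (by omega : N₁ ≤ m)
    have h2 := hA m
    push_cast at h2 ⊢
    linarith
  rw [tendsto_atBot]
  intro M
  obtain ⟨N₂, hN₂⟩ := (hgbot.eventually (eventually_le_atBot M)).exists_forall_of_atTop
  set N := max (N₁ + 1) N₂ with hN
  have hmem : Ioo (y N) yinf ∈ nhdsWithin yinf (Iio yinf) :=
    Ioo_mem_nhdsLT_of_mem ⟨hlt N, le_refl _⟩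
  filter_upwards [hmem] with t ht
  -- find n with y n ≤ t < y (n+1)
  have hex : ∃ m, t < y m := (hty.eventually (eventually_gt_nhds ht.2)).exists
  classical
  set m₀ := Nat.find hex with hm₀
  have hm₀pos : 0 < m₀ := by
    rcases Nat.eq_zero_or_pos m₀ with h0 | h0
    · exfalso
      have := Nat.find_spec hex
      rw [← hm₀, h0] at this
      have hy0 : y 0 ≤ y N := hmono.monotone (Nat.zero_le N)
      linarith [ht.1]
    · exact h0
  obtain ⟨n, hn⟩ : ∃ n, m₀ = n + 1 := ⟨m₀ - 1, by omega⟩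
  have ht1 : t < y (n + 1) := by rw [← hn]; exact Nat.find_spec hex
  have ht0 : y n ≤ t := by
    by_contra hcon
    exact Nat.find_min hex (by omega : n < m₀) (lt_of_not_ge hcon)
  have hnN : N ≤ n := by
    by_contra hcon
    have : y (n + 1) ≤ y N := hmono.monotone (by omega)
    linarith [ht.1]
  -- conclude
  have hgt := haff n t ⟨ht0, ht1.le⟩
  have hgn := haff n (y n) ⟨le_refl _, (hmono (Nat.lt_succ_self n)).le⟩
  have hneg' : h (n + 1) ≤ 0 := hneg n (le_trans (le_max_left _ _) hnN)
  have hgle : g t ≤ g (y n) := by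
    rw [hgt, hgn]
    nlinarith
  exact le_trans hgle (hN₂ n (le_trans (le_max_right _ _) hnN))
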